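/- For all ε > 0 and Ω ≥ 0, every GP minimizer Ψ satisfies ‖ |Ψ|² − 1/π ‖_{L²(B₁)} ≤ εΩ/2, and consequently ‖ |Ψ|² − 1/π ‖_{L¹(B₁)} ≤ √π · εΩ/2. In particular, if Ω = Ω(ε) satisfies εΩ(ε) → 0 as ε → 0, the density |Ψ|² converges to the constant 1/π in L¹(B₁). -/

import Mathlib

open MeasureTheory Real Filter

noncomputable section

/-- Points of the plane. -/
abbrev Pt : Type := EuclideanSpace ℝ (Fin 2)

/-- The open unit disc. -/
def B1 : Set Pt := Metric.ball 0 1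

/-- First partial derivative of a complex-valued function. -/
def pd1 (Ψ : Pt → ℂ) (x : Pt) : ℂ := fderiv ℝ Ψ x (EuclideanSpace.single 0 1)

/-- Second partial derivative of a complex-valued function. -/
def pd2 (Ψ : Pt → ℂ) (x : Pt) : ℂ := fderiv ℝ Ψ x (EuclideanSpace.single 1 1)

/-- Angular momentum operator `L = -i (x₁ ∂₂ - x₂ ∂₁)`. -/
def angMom (Ψ : Pt → ℂ) (x : Pt) : ℂ :=
  -Complex.I * ((x 0 : ℂ) * pd2 Ψ x - (x 1 : ℂ) * pd1 Ψ x)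

/-- The Gross-Pitaevskii energy density `|∇Ψ|² - Ω conj(Ψ) LΨ + |Ψ|⁴/ε²`. -/
def gpDensity (ε Ω : ℝ) (Ψ : Pt → ℂ) (x : Pt) : ℝ :=
  ‖pd1 Ψ x‖ ^ 2 + ‖pd2 Ψ x‖ ^ 2
    - Ω * (starRingEnd ℂ (Ψ x) * angMom Ψ x).re
    + ‖Ψ x‖ ^ 4 / ε ^ 2

/-- The Gross-Pitaevskii functional on the unit disc. -/
def gpEnergy (ε Ω : ℝ) (Ψ : Pt → ℂ) : ℝ := ∫ x in B1, gpDensity ε Ω Ψ x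

/-- Admissible (H¹, normalized) wave functions. -/
def gpAdm (Ψ : Pt → ℂ) : Prop :=
  DifferentiableOn ℝ Ψ B1 ∧
  IntegrableOn (fun x => ‖Ψ x‖ ^ 2) B1 ∧
  IntegrableOn (fun x => ‖pd1 Ψ x‖ ^ 2 + ‖pd2 Ψ x‖ ^ 2) B1 ∧
  IntegrableOn (fun x => ‖Ψ x‖ ^ 4) B1 ∧
  IntegrableOn (fun x => (starRingEnd ℂ (Ψ x) * angMom Ψ x).re) B1 ∧
  (∫ x in B1, ‖Ψ x‖ ^ 2) = 1

/-- The GP ground-state energy: infimum of the functional over normalized functions. -/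
def gpGround (ε Ω : ℝ) : ℝ := sInf {E | ∃ Ψ : Pt → ℂ, gpAdm Ψ ∧ E = gpEnergy ε Ω Ψ}

/-- A GP minimizer: a normalized admissible function attaining the infimum. -/
def IsGPMinimizer (ε Ω : ℝ) (Ψ : Pt → ℂ) : Prop :=
  gpAdm Ψ ∧ gpEnergy ε Ω Ψ = gpGround ε Ω

/-- The Thomas-Fermi functional. -/
def tfEnergy (Ω₀ : ℝ) (ρ : Pt → ℝ) : ℝ :=
  ∫ x in B1, ((ρ x) ^ 2 - Ω₀ ^ 2 * ‖x‖ ^ 2 * ρ x / 4)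

/-- Admissible TF densities: nonnegative, in L²(B₁), of total mass one. -/
def tfAdm (ρ : Pt → ℝ) : Prop :=
  IntegrableOn ρ B1 ∧ IntegrableOn (fun x => (ρ x) ^ 2) B1 ∧
  (∀ᵐ x ∂(volume.restrict B1), 0 ≤ ρ x) ∧ (∫ x in B1, ρ x) = 1

/-- The TF ground-state energy. -/
def tfGround (Ω₀ : ℝ) : ℝ := sInf {E | ∃ ρ : Pt → ℝ, tfAdm ρ ∧ E = tfEnergy Ω₀ ρ}

/-- Radius of the TF "hole". -/
def R0 (Ω₀ : ℝ) : ℝ := Real.sqrt (1 - 4 / (Real.sqrt π * Ω₀))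

/-- The TF minimizer. -/
def rhoTF (Ω₀ : ℝ) (x : Pt) : ℝ :=
  if Ω₀ ≤ 4 / Real.sqrt π then 1 / π - Ω₀ ^ 2 / 16 * (1 - 2 * ‖x‖ ^ 2)
  else max 0 (Ω₀ ^ 2 / 8 * (‖x‖ ^ 2 - 1) + Ω₀ / (2 * Real.sqrt π))


/-! ### Auxiliary lemmas -/

lemma B1_meas : MeasurableSet B1 := measurableSet_ball

lemma vol_B1 : volume B1 = ENNReal.ofReal π := by
  rw [B1, EuclideanSpace.volume_ball]
  norm_num [Real.sq_sqrt Real.pi_nonneg, Real.Gamma_two]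

lemma vol_B1_toReal : (volume B1).toReal = π := by
  rw [vol_B1, ENNReal.toReal_ofReal Real.pi_nonneg]

lemma vol_B1_lt_top : volume B1 < ⊤ := by
  rw [vol_B1]; exact ENNReal.ofReal_lt_top

lemma integrableOn_const_B1 (c : ℝ) : IntegrableOn (fun _ : Pt => c) B1 :=
  integrableOn_const vol_B1_lt_top.ne

lemma integral_const_B1 (c : ℝ) : (∫ _ in B1, c) = c * π := by
  rw [setIntegral_const, measureReal_def, vol_B1_toReal, smul_eq_mul, mul_comm]

lemma density_lower (ε Ω : ℝ) (hΩ : 0 ≤ Ω) (Ψ : Pt → ℂ) {x : Pt} (hx : x ∈ B1) :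
    ‖Ψ x‖ ^ 4 / ε ^ 2 - Ω ^ 2 * ‖Ψ x‖ ^ 2 / 4 ≤ gpDensity ε Ω Ψ x := by
  simp only [gpDensity, angMom]
  set p := pd1 Ψ x with hp
  set q := pd2 Ψ x with hq
  set ψ := Ψ x with hψ
  set a := x 0 with ha
  set b := x 1 with hb
  set t := ‖(a : ℂ) * q - (b : ℂ) * p‖ with htdef
  have hx2 : a ^ 2 + b ^ 2 ≤ 1 := by
    have h := mem_ball_zero_iff.mp hx
    have hn : ‖x‖ ^ 2 = a ^ 2 + b ^ 2 := by
      rw [EuclideanSpace.norm_eq, Real.sq_sqrt (by positivity)]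
      simp [Fin.sum_univ_two, Real.norm_eq_abs, sq_abs, ← ha, ← hb]
    nlinarith [norm_nonneg x]
  have hre : (starRingEnd ℂ ψ * (-Complex.I * ((a : ℂ) * q - (b : ℂ) * p))).re
      ≤ ‖ψ‖ * t := by
    calc (starRingEnd ℂ ψ * (-Complex.I * ((a : ℂ) * q - (b : ℂ) * p))).re
        ≤ ‖starRingEnd ℂ ψ * (-Complex.I * ((a : ℂ) * q - (b : ℂ) * p))‖ :=
          Complex.re_le_norm _
      _ = ‖ψ‖ * t := by
          rw [norm_mul, norm_mul, norm_neg, Complex.norm_I, one_mul, RCLike.norm_conj]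
  have h1 : t ≤ |a| * ‖q‖ + |b| * ‖p‖ := by
    calc t ≤ ‖(a : ℂ) * q‖ + ‖(b : ℂ) * p‖ := norm_sub_le _ _
    _ = |a| * ‖q‖ + |b| * ‖p‖ := by
        simp [norm_mul, Complex.norm_real, Real.norm_eq_abs]
  have ht2 : t ^ 2 ≤ ‖p‖ ^ 2 + ‖q‖ ^ 2 := by
    nlinarith [sq_nonneg (|a| * ‖p‖ - |b| * ‖q‖), sq_abs a, sq_abs b,
      abs_nonneg a, abs_nonneg b, norm_nonneg p, norm_nonneg q,
      norm_nonneg ((a : ℂ) * q - (b : ℂ) * p), mul_nonneg (abs_nonneg a) (norm_nonneg q),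
      mul_nonneg (abs_nonneg b) (norm_nonneg p)]
  have hAM : Ω * (‖ψ‖ * t) ≤ t ^ 2 + Ω ^ 2 * ‖ψ‖ ^ 2 / 4 := by
    nlinarith [sq_nonneg (t - Ω * ‖ψ‖ / 2)]
  have hre' : Ω * (starRingEnd ℂ ψ * (-Complex.I * ((a : ℂ) * q - (b : ℂ) * p))).re
      ≤ Ω * (‖ψ‖ * t) := mul_le_mul_of_nonneg_left hre hΩ
  linarith

lemma gpDensity_integrable (ε Ω : ℝ) {Ψ : Pt → ℂ} (h : gpAdm Ψ) :
    IntegrableOn (gpDensity ε Ω Ψ) B1 := by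
  obtain ⟨-, h2, h3, h4, h5, -⟩ := h
  exact (h3.sub (h5.const_mul Ω)).add (h4.div_const (ε ^ 2))

lemma gpEnergy_lower (ε Ω : ℝ) (hΩ : 0 ≤ Ω) {Ψ : Pt → ℂ} (h : gpAdm Ψ) :
    (∫ x in B1, ‖Ψ x‖ ^ 4) / ε ^ 2 - Ω ^ 2 / 4 ≤ gpEnergy ε Ω Ψ := by
  have h2 := h.2.1
  have h4 := h.2.2.2.1
  have h6 := h.2.2.2.2.2
  have hInt : IntegrableOn (fun x => ‖Ψ x‖ ^ 4 / ε ^ 2 - Ω ^ 2 * ‖Ψ x‖ ^ 2 / 4) B1 :=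
    (h4.div_const _).sub ((h2.const_mul (Ω ^ 2)).div_const 4)
  have hmono := setIntegral_mono_on hInt
    (gpDensity_integrable ε Ω h) B1_meas
    (fun x hx => density_lower ε Ω hΩ Ψ hx)
  rw [integral_sub (h4.div_const _) ((h2.const_mul (Ω ^ 2)).div_const 4), integral_div,
    integral_div, integral_const_mul, h6, mul_one] at hmono
  rw [gpEnergy]
  exact hmono

lemma gpEnergy_lower' (ε Ω : ℝ) (hΩ : 0 ≤ Ω) {Ψ : Pt → ℂ} (h : gpAdm Ψ) :
    -(Ω ^ 2 / 4) ≤ gpEnergy ε Ω Ψ := by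
  have h1 := gpEnergy_lower ε Ω hΩ h
  have h2 : 0 ≤ (∫ x in B1, ‖Ψ x‖ ^ 4) / ε ^ 2 := by positivity
  linarith

/-- The constant trial function. -/
def psi0 : Pt → ℂ := fun _ => ((Real.sqrt π)⁻¹ : ℝ)

lemma psi0_normSq (x : Pt) : ‖psi0 x‖ ^ 2 = 1 / π := by
  have h : ‖psi0 x‖ = (Real.sqrt π)⁻¹ := by
    rw [psi0, Complex.norm_real, Real.norm_eq_abs,
      abs_of_nonneg (by positivity)]
  rw [h, ← Real.sq_sqrt Real.pi_nonneg]
  field_simp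
  rw [Real.sqrt_sq (Real.sqrt_nonneg _)]

lemma fderiv_psi0 (x : Pt) : fderiv ℝ psi0 x = 0 := fderiv_const_apply _
lemma pd1_psi0 (x : Pt) : pd1 psi0 x = 0 := by rw [pd1, fderiv_psi0]; rfl
lemma pd2_psi0 (x : Pt) : pd2 psi0 x = 0 := by rw [pd2, fderiv_psi0]; rfl

lemma psi0_adm : gpAdm psi0 := by
  have hsq : (fun x : Pt => ‖psi0 x‖ ^ 2) = fun _ => 1 / π := funext psi0_normSq
  have hq : (fun x : Pt => ‖psi0 x‖ ^ 4) = fun _ => 1 / π ^ 2 := by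
    funext x
    have : ‖psi0 x‖ ^ 4 = (‖psi0 x‖ ^ 2) ^ 2 := by ring
    rw [this, psi0_normSq]; field_simp
  refine ⟨differentiableOn_const _, ?_, ?_, ?_, ?_, ?_⟩
  · rw [hsq]; exact integrableOn_const_B1 _
  · have : (fun x : Pt => ‖pd1 psi0 x‖ ^ 2 + ‖pd2 psi0 x‖ ^ 2) = fun _ => 0 := by
      funext x; simp [pd1_psi0, pd2_psi0]
    rw [this]; exact integrableOn_const_B1 _
  · rw [hq]; exact integrableOn_const_B1 _
  · have : (fun x : Pt => (starRingEnd ℂ (psi0 x) * angMom psi0 x).re) = fun _ => 0 := by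
      funext x; simp [angMom, pd1_psi0, pd2_psi0]
    rw [this]; exact integrableOn_const_B1 _
  · rw [hsq, integral_const_B1]
    field_simp

lemma psi0_energy (ε Ω : ℝ) (hε : ε ≠ 0) : gpEnergy ε Ω psi0 = 1 / (π * ε ^ 2) := by
  have hd : (fun x => gpDensity ε Ω psi0 x) = fun _ : Pt => 1 / π ^ 2 / ε ^ 2 := by
    funext x
    have h4 : ‖psi0 x‖ ^ 4 = 1 / π ^ 2 := by
      have : ‖psi0 x‖ ^ 4 = (‖psi0 x‖ ^ 2) ^ 2 := by ring
      rw [this, psi0_normSq]; field_simp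
    simp only [gpDensity, angMom, pd1_psi0, pd2_psi0, mul_zero, zero_mul, sub_zero,
      norm_zero, Complex.zero_re, zero_add, neg_zero, h4]
    ring_nf
  rw [gpEnergy]
  simp only [hd]
  rw [integral_const_B1]
  have hπ : (π : ℝ) ≠ 0 := Real.pi_ne_zero
  field_simp

lemma abs_le_quad {c d u : ℝ} (hc : 0 < c) (hcd : c * d = 1 / 4) :
    |u| ≤ c * u ^ 2 + d := by
  nlinarith [sq_nonneg (2 * c * |u| - 1), sq_abs u, abs_nonneg u, mul_pos hc hc]

lemma gpGround_le (ε Ω : ℝ) (hε : ε ≠ 0) (hΩ : 0 ≤ Ω) : gpGround ε Ω ≤ 1 / (π * ε ^ 2) := by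
  rw [gpGround, ← psi0_energy ε Ω hε]
  exact csInf_le ⟨-(Ω ^ 2 / 4), fun E ⟨Ψ, hΨ, hE⟩ => hE ▸ gpEnergy_lower' ε Ω hΩ hΨ⟩
    ⟨psi0, psi0_adm, rfl⟩

theorem stmt1 :
    (∀ ε : ℝ, 0 < ε → ∀ Ω : ℝ, 0 ≤ Ω → ∀ Ψ : Pt → ℂ, IsGPMinimizer ε Ω Ψ →
      Real.sqrt (∫ x in B1, (‖Ψ x‖ ^ 2 - 1 / π) ^ 2) ≤ ε * Ω / 2 ∧
      (∫ x in B1, |‖Ψ x‖ ^ 2 - 1 / π|) ≤ Real.sqrt π * (ε * Ω / 2)) ∧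
    (∀ (Ω : ℝ → ℝ) (Ψ : ℝ → Pt → ℂ),
      (∀ ε : ℝ, 0 < ε → 0 ≤ Ω ε) →
      Tendsto (fun ε => ε * Ω ε) (nhdsWithin 0 (Set.Ioi 0)) (nhds 0) →
      (∀ ε : ℝ, 0 < ε → IsGPMinimizer ε (Ω ε) (Ψ ε)) →
      Tendsto (fun ε => ∫ x in B1, |‖Ψ ε x‖ ^ 2 - 1 / π|)
        (nhdsWithin 0 (Set.Ioi 0)) (nhds 0)) := by
  have key : ∀ ε : ℝ, 0 < ε → ∀ Ω : ℝ, 0 ≤ Ω → ∀ Ψ : Pt → ℂ, IsGPMinimizer ε Ω Ψ →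
      Real.sqrt (∫ x in B1, (‖Ψ x‖ ^ 2 - 1 / π) ^ 2) ≤ ε * Ω / 2 ∧
      (∫ x in B1, |‖Ψ x‖ ^ 2 - 1 / π|) ≤ Real.sqrt π * (ε * Ω / 2) := by
    intro ε hε Ω hΩ Ψ hm
    obtain ⟨hadm, hmin⟩ := hm
    have h2 := hadm.2.1
    have h4 := hadm.2.2.2.1
    have h6 := hadm.2.2.2.2.2
    have hE : gpEnergy ε Ω Ψ ≤ 1 / (π * ε ^ 2) := by
      rw [hmin]; exact gpGround_le ε Ω (ne_of_gt hε) hΩ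
    have hlow := gpEnergy_lower ε Ω hΩ hadm
    set Q := ∫ x in B1, ‖Ψ x‖ ^ 4 with hQ
    clear_value Q
    have hQb : Q ≤ 1 / π + ε ^ 2 * Ω ^ 2 / 4 := by
      have h1 : Q / ε ^ 2 ≤ 1 / (π * ε ^ 2) + Ω ^ 2 / 4 := by linarith
      have h2' : Q ≤ (1 / (π * ε ^ 2) + Ω ^ 2 / 4) * ε ^ 2 :=
        (div_le_iff₀ (pow_pos hε 2)).mp h1
      have h3' : (1 / (π * ε ^ 2) + Ω ^ 2 / 4) * ε ^ 2 = 1 / π + ε ^ 2 * Ω ^ 2 / 4 := by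
        have hπ : (π : ℝ) ≠ 0 := Real.pi_ne_zero
        field_simp
      linarith
    have hexp : ∀ x : Pt, (‖Ψ x‖ ^ 2 - 1 / π) ^ 2
        = ‖Ψ x‖ ^ 4 - 2 / π * ‖Ψ x‖ ^ 2 + 1 / π ^ 2 := by
      intro x
      have h : ‖Ψ x‖ ^ 4 = (‖Ψ x‖ ^ 2) ^ 2 := by ring
      rw [h]
      have hπ : (π : ℝ) ≠ 0 := Real.pi_ne_zero
      field_simp
      ring
    have hfi : IntegrableOn (fun x => ‖Ψ x‖ ^ 2 - 1 / π) B1 :=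
      h2.sub (integrableOn_const_B1 _)
    have hf2i : IntegrableOn (fun x => (‖Ψ x‖ ^ 2 - 1 / π) ^ 2) B1 := by
      have heq : (fun x : Pt => (‖Ψ x‖ ^ 2 - 1 / π) ^ 2)
          = fun x => ‖Ψ x‖ ^ 4 - 2 / π * ‖Ψ x‖ ^ 2 + 1 / π ^ 2 := funext hexp
      rw [heq]
      exact (h4.sub (h2.const_mul _)).add (integrableOn_const_B1 _)
    set A := ∫ x in B1, (‖Ψ x‖ ^ 2 - 1 / π) ^ 2 with hA
    clear_value A
    have hAval : A = Q - 2 / π * 1 + 1 / π ^ 2 * π := by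
      have hi1 : IntegrableOn (fun x => ‖Ψ x‖ ^ 4 - 2 / π * ‖Ψ x‖ ^ 2) B1 :=
        h4.sub (h2.const_mul _)
      have hi3 : IntegrableOn (fun x => 2 / π * ‖Ψ x‖ ^ 2) B1 := h2.const_mul _
      rw [hA, hQ]
      simp_rw [hexp]
      rw [integral_add hi1 (integrableOn_const_B1 (1 / π ^ 2)),
        integral_sub h4 hi3, integral_const_mul, h6, integral_const_B1]
    have hAval' : A = Q - 1 / π := by
      rw [hAval]
      have hπ : (π : ℝ) ≠ 0 := Real.pi_ne_zero
      field_simp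
      ring
    have hA0 : 0 ≤ A := by
      rw [hA]; exact setIntegral_nonneg B1_meas (fun x _ => sq_nonneg _)
    have hAb : A ≤ (ε * Ω / 2) ^ 2 := by
      rw [hAval']
      nlinarith [hQb]
    have part1 : Real.sqrt A ≤ ε * Ω / 2 := by
      have h := Real.sqrt_le_sqrt hAb
      rwa [Real.sqrt_sq (by positivity)] at h
    refine ⟨part1, ?_⟩
    by_cases hA0' : A = 0
    · rw [hA] at hA0'
      have hzero : (fun x => (‖Ψ x‖ ^ 2 - 1 / π) ^ 2) =ᵐ[volume.restrict B1] 0 :=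
        (integral_eq_zero_iff_of_nonneg (fun x => sq_nonneg _) hf2i).mp hA0'
      have habs : (fun x => |‖Ψ x‖ ^ 2 - 1 / π|) =ᵐ[volume.restrict B1] 0 := by
        filter_upwards [hzero] with x hx
        have hx0 : ((‖Ψ x‖ ^ 2 - 1 / π) ^ 2 : ℝ) = 0 := by simpa using hx
        have hx' : ‖Ψ x‖ ^ 2 - 1 / π = 0 := by nlinarith [hx0]
        simp only [Pi.zero_apply]
        rw [hx', abs_zero]
      rw [integral_congr_ae habs]
      simp
      positivity
    · have hApos : 0 < A := lt_of_le_of_ne hA0 (Ne.symm hA0')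
      set sA := Real.sqrt A with hsA
      clear_value sA
      set sπ := Real.sqrt π with hsπdef
      clear_value sπ
      have hsApos : 0 < sA := by rw [hsA]; exact Real.sqrt_pos.mpr hApos
      have hsπ : 0 < sπ := by rw [hsπdef]; exact Real.sqrt_pos.mpr Real.pi_pos
      set c := sπ / (2 * sA) with hc
      clear_value c
      set d := sA / (2 * sπ) with hd
      clear_value d
      have hcpos : 0 < c := by
        rw [hc]; exact div_pos hsπ (by positivity)
      have hcd : c * d = 1 / 4 := by
        rw [hc, hd]
        field_simp
        ring
      have hpt : ∀ x ∈ B1, |‖Ψ x‖ ^ 2 - 1 / π| ≤ c * (‖Ψ x‖ ^ 2 - 1 / π) ^ 2 + d :=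
        fun x _ => abs_le_quad hcpos hcd
      have hint2 : IntegrableOn (fun x => c * (‖Ψ x‖ ^ 2 - 1 / π) ^ 2 + d) B1 :=
        (hf2i.const_mul c).add (integrableOn_const_B1 d)
      have hmono := setIntegral_mono_on hfi.abs hint2 B1_meas hpt
      rw [integral_add (hf2i.const_mul c) (integrableOn_const_B1 d), integral_const_mul,
        integral_const_B1] at hmono
      rw [← hA] at hmono
      have hππ : sπ ^ 2 = π := by rw [hsπdef]; exact Real.sq_sqrt Real.pi_nonneg
      have hAA : sA ^ 2 = A := by rw [hsA]; exact Real.sq_sqrt hA0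
      have hval : c * A + d * π = sπ * sA := by
        rw [← hππ, ← hAA, hc, hd]
        field_simp
        ring
      have hfin : sπ * sA ≤ sπ * (ε * Ω / 2) :=
        mul_le_mul_of_nonneg_left part1 (le_of_lt hsπ)
      linarith
  refine ⟨key, ?_⟩
  intro Ω Ψ hΩ hTend hmin
  have hb : ∀ ε : ℝ, ε ∈ Set.Ioi (0 : ℝ) →
      (∫ x in B1, |‖Ψ ε x‖ ^ 2 - 1 / π|) ≤ Real.sqrt π * (ε * Ω ε / 2) :=
    fun ε hε => (key ε hε (Ω ε) (hΩ ε hε) (Ψ ε) (hmin ε hε)).2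
  have hg : Tendsto (fun ε => Real.sqrt π * (ε * Ω ε / 2)) (nhdsWithin 0 (Set.Ioi 0))
      (nhds 0) := by
    have := (hTend.div_const 2).const_mul (Real.sqrt π)
    simpa using this
  refine tendsto_of_tendsto_of_tendsto_of_le_of_le' tendsto_const_nhds hg ?_ ?_
  · exact Filter.eventually_of_mem self_mem_nhdsWithin (fun ε _ =>
      setIntegral_nonneg B1_meas (fun x _ => abs_nonneg _))
  · exact Filter.eventually_of_mem self_mem_nhdsWithin hb
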